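/- arXiv:2206.08269 — 2 statements merged into one kernel-verified Lean document; each statement's English description precedes it below -/
import Mathlib

section
/- Let $A \subseteq \mathbb{R}^{d}$ be symmetric about the origin ($x \in A \iff -x \in A$), let $W \sim N(0, I_d)$, and define $\bar{W} = W \cdot \mathbf{1}\{W \in A\}$. Then $\bar{W}$ is zero-mean and $4$-sub-Gaussian: for every unit vector $u$ and every $\lambda \in \mathbb{R}$, $\mathbb{E}\exp(\lambda \langle u, \bar{W} \rangle) \leq \exp(2\lambda^2)$. -/
open MeasureTheory ProbabilityTheory Real Finset
open scoped ENNReal NNReal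

namespace TruncGauss

/-- Complete the square: `exp(cx) pdf₀(x) = exp(c²/2) pdf_c(x)`. -/
lemma pdf_shift (c x : ℝ) :
    rexp (c * x) * gaussianPDFReal 0 1 x = rexp (c ^ 2 / 2) * gaussianPDFReal c 1 x := by
  unfold gaussianPDFReal
  simp only [NNReal.coe_one, mul_one, sub_zero]
  rw [mul_left_comm, mul_left_comm (rexp (c ^ 2 / 2)), ← Real.exp_add, ← Real.exp_add]
  congr 1
  ring_nf

lemma integral_gauss (g : ℝ → ℝ) :
    ∫ x, g x ∂(gaussianReal 0 1) = ∫ x, gaussianPDFReal 0 1 x * g x := by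
  rw [gaussianReal_of_var_ne_zero _ one_ne_zero]
  have h : gaussianPDF 0 1 = fun x => ((gaussianPDFReal 0 1 x).toNNReal : ℝ≥0∞) := rfl
  rw [h, integral_withDensity_eq_integral_smul
    ((measurable_gaussianPDFReal 0 1).real_toNNReal) g]
  congr 1 with x
  rw [NNReal.smul_def, Real.coe_toNNReal _ (gaussianPDFReal_nonneg 0 1 x), smul_eq_mul]

lemma integrable_gauss_iff (g : ℝ → ℝ) :
    Integrable g (gaussianReal 0 1) ↔
      Integrable (fun x => gaussianPDFReal 0 1 x * g x) volume := by
  rw [gaussianReal_of_var_ne_zero _ one_ne_zero]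
  have h : gaussianPDF 0 1 = fun x => ((gaussianPDFReal 0 1 x).toNNReal : ℝ≥0∞) := rfl
  rw [h, integrable_withDensity_iff_integrable_smul
    ((measurable_gaussianPDFReal 0 1).real_toNNReal)]
  constructor <;> intro hh <;> refine hh.congr (Filter.Eventually.of_forall fun x => ?_) <;>
    simp only [NNReal.smul_def, smul_eq_mul,
      Real.coe_toNNReal _ (gaussianPDFReal_nonneg 0 1 x)]

lemma integrable_exp_mul (c : ℝ) :
    Integrable (fun x => rexp (c * x)) (gaussianReal 0 1) := by
  rw [integrable_gauss_iff]
  have : (fun x => gaussianPDFReal 0 1 x * rexp (c * x))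
      = fun x => rexp (c ^ 2 / 2) * gaussianPDFReal c 1 x := by
    funext x; rw [mul_comm, pdf_shift]
  rw [this]
  exact (integrable_gaussianPDFReal c 1).const_mul _

lemma integral_exp_mul (c : ℝ) :
    ∫ x, rexp (c * x) ∂(gaussianReal 0 1) = rexp (c ^ 2 / 2) := by
  rw [integral_gauss]
  simp_rw [mul_comm (gaussianPDFReal 0 1 _), pdf_shift]
  rw [integral_const_mul, integral_gaussianPDFReal_eq_one c one_ne_zero, mul_one]

lemma gauss_neg : Measure.map (fun x : ℝ => -x) (gaussianReal 0 1) = gaussianReal 0 1 := by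
  have h := gaussianReal_map_const_mul (μ := 0) (v := 1) (-1)
  have h2 : (fun x : ℝ => -x) = ((-1 : ℝ) * ·) := by funext x; ring
  rw [h2, h]
  congr 1
  · ring
  · rw [mul_one]
    ext
    norm_num

lemma pi_neg (d : ℕ) :
    Measure.map (fun x : Fin d → ℝ => -x) (Measure.pi fun _ => gaussianReal 0 1)
      = Measure.pi fun _ : Fin d => gaussianReal 0 1 := by
  refine (Measure.pi_eq fun s hs => ?_).symm
  rw [Measure.map_apply measurable_neg (MeasurableSet.univ_pi hs)]
  have h : (fun x : Fin d → ℝ => -x) ⁻¹' (Set.pi Set.univ s)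
      = Set.pi Set.univ fun i => (fun a : ℝ => -a) ⁻¹' s i := by
    ext x; simp [Set.mem_pi]
  rw [h, Measure.pi_pi]
  refine Finset.prod_congr rfl fun i _ => ?_
  rw [← Measure.map_apply measurable_neg (hs i), gauss_neg]

open Classical in
/-- Symmetric truncation. -/
noncomputable def trunc {d : ℕ} (A : Set (Fin d → ℝ)) (x : Fin d → ℝ) : Fin d → ℝ :=
  if x ∈ A then x else 0

lemma trunc_measurable {d : ℕ} {A : Set (Fin d → ℝ)} (hA : MeasurableSet A) :
    Measurable (trunc A) := by
  unfold trunc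
  exact Measurable.ite hA measurable_id measurable_const

lemma trunc_neg {d : ℕ} {A : Set (Fin d → ℝ)} (hA : ∀ x, x ∈ A ↔ -x ∈ A)
    (x : Fin d → ℝ) : trunc A (-x) = -trunc A x := by
  unfold trunc
  by_cases h : x ∈ A
  · rw [if_pos ((hA x).mp h), if_pos h]
  · have h' : ¬ (-x ∈ A) := fun hc => h (by simpa using (hA (-x)).mp hc)
    rw [if_neg h', if_neg h, neg_zero]

/-- MGF of a unit-vector projection of the standard Gaussian product measure. -/
lemma pi_exp {d : ℕ} (u : Fin d → ℝ) (hu : ∑ i, u i ^ 2 = 1) (c : ℝ) :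
    Integrable (fun x : Fin d → ℝ => rexp (c * ∑ i, u i * x i))
      (Measure.pi fun _ => gaussianReal 0 1) ∧
    ∫ x : Fin d → ℝ, rexp (c * ∑ i, u i * x i) ∂(Measure.pi fun _ => gaussianReal 0 1)
      = rexp (c ^ 2 / 2) := by
  letI : MeasureSpace ℝ := ⟨gaussianReal 0 1⟩
  haveI : SigmaFinite (volume : Measure ℝ) := inferInstanceAs (SigmaFinite (gaussianReal 0 1))
  have hvol : (Measure.pi fun _ : Fin d => gaussianReal 0 1) = (volume : Measure (Fin d → ℝ)) :=
    (MeasureTheory.volume_pi).symm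
  have hrw : ∀ x : Fin d → ℝ, rexp (c * ∑ i, u i * x i) = ∏ i, rexp (c * u i * x i) := by
    intro x
    rw [Finset.mul_sum, Real.exp_sum]
    exact Finset.prod_congr rfl fun i _ => by ring_nf
  have hsum : ∑ i, (c * u i) ^ 2 / 2 = c ^ 2 / 2 := by
    simp_rw [mul_pow]
    rw [← Finset.sum_div, ← Finset.mul_sum, hu, mul_one]
  constructor
  · rw [hvol]
    have := Integrable.fintype_prod (𝕜 := ℝ) (E := ℝ)
      (f := fun (i : Fin d) (a : ℝ) => rexp (c * u i * a))
      (fun i => integrable_exp_mul (c * u i))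
    exact this.congr (Filter.Eventually.of_forall fun x => (hrw x).symm)
  · rw [hvol]
    simp_rw [hrw]
    rw [← hvol, MeasureTheory.integral_fintype_prod_eq_prod
      (f := fun (i : Fin d) (a : ℝ) => rexp (c * u i * a))]
    have : ∀ i : Fin d, ∫ a : ℝ, rexp (c * u i * a) ∂(gaussianReal 0 1) = rexp ((c * u i) ^ 2 / 2) :=
      fun i => integral_exp_mul (c * u i)
    rw [Finset.prod_congr rfl fun i _ => this i, ← Real.exp_sum, hsum]

lemma two_le_exp_add (t : ℝ) : 2 ≤ rexp t + rexp (-t) := by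
  have h1 := Real.exp_pos t
  have h2 : rexp (-t) = (rexp t)⁻¹ := Real.exp_neg t
  rw [h2]
  have h3 : rexp t * (rexp t)⁻¹ = 1 := mul_inv_cancel₀ (ne_of_gt h1)
  nlinarith [sq_nonneg (rexp t - 1)]

end TruncGauss

open TruncGauss

open MeasureTheory ProbabilityTheory Real Finset Classical in

/-- A symmetrically truncated standard Gaussian vector is zero-mean and
`4`-sub-Gaussian (Proposition `truncated_sub_gaussian_bound`). -/
theorem truncated_gaussian_subGaussian
    {Ω : Type*} [MeasurableSpace Ω] (P : Measure Ω) [IsProbabilityMeasure P]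
    {d : ℕ} (W : Ω → (Fin d → ℝ)) (hWmeas : Measurable W)
    (hW : Measure.map W P = Measure.pi fun _ : Fin d => gaussianReal 0 1)
    (A : Set (Fin d → ℝ)) (hA_meas : MeasurableSet A)
    (hA_symm : ∀ x, x ∈ A ↔ -x ∈ A)
    (Wbar : Ω → (Fin d → ℝ))
    (hWbar : ∀ ω, Wbar ω = if W ω ∈ A then W ω else 0) :
    (∀ i, ∫ ω, Wbar ω i ∂P = 0) ∧
    (∀ u : Fin d → ℝ, ∑ i, (u i) ^ 2 = 1 → ∀ lam : ℝ,
      ∫ ω, Real.exp (lam * ∑ i, u i * Wbar ω i) ∂P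
        ≤ Real.exp (2 * lam ^ 2)) := by
  set μ := Measure.pi fun _ : Fin d => gaussianReal 0 1 with hμ
  have hWbar' : ∀ ω, Wbar ω = trunc A (W ω) := by
    intro ω; rw [hWbar]; rfl
  have htm : Measurable (trunc A) := trunc_measurable hA_meas
  constructor
  · intro i
    have hmi : Measurable fun x : Fin d → ℝ => trunc A x i :=
      (measurable_pi_apply i).comp htm
    have h1 : ∫ ω, Wbar ω i ∂P = ∫ x, trunc A x i ∂μ := by
      calc ∫ ω, Wbar ω i ∂P = ∫ ω, trunc A (W ω) i ∂P := by
            refine integral_congr_ae (Filter.Eventually.of_forall fun ω => ?_)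
            simp only [hWbar']
        _ = ∫ x, trunc A x i ∂(Measure.map W P) :=
            (integral_map hWmeas.aemeasurable hmi.aestronglyMeasurable).symm
        _ = ∫ x, trunc A x i ∂μ := by rw [hW]
    have hmap : Measure.map (fun x : Fin d → ℝ => -x) μ = μ := by
      rw [hμ]; exact pi_neg d
    have h2 : ∫ x, trunc A x i ∂μ = - ∫ x, trunc A x i ∂μ := by
      conv_lhs => rw [← hmap]
      rw [integral_map measurable_neg.aemeasurable hmi.aestronglyMeasurable]
      simp_rw [trunc_neg hA_symm, Pi.neg_apply, integral_neg]
    rw [h1]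
    linarith [h2]
  · intro u hu lam
    set S : (Fin d → ℝ) → ℝ := fun x => ∑ i, u i * x i with hS
    set g : (Fin d → ℝ) → ℝ := fun x => ∑ i, u i * trunc A x i with hg
    have hSm : Measurable S := by
      refine Finset.measurable_sum _ fun i _ => ?_
      have hp : Measurable fun x : Fin d → ℝ => x i := measurable_pi_apply i
      exact hp.const_mul (u i)
    have hgm : Measurable g := by
      refine Finset.measurable_sum _ fun i _ => ?_
      have hp : Measurable fun x : Fin d → ℝ => x i := measurable_pi_apply i
      exact ((hp.comp htm).const_mul (u i))
    have hg_eq : ∀ x, g x = if x ∈ A then S x else 0 := by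
      intro x
      rw [hg]
      by_cases h : x ∈ A
      · simp only [trunc, if_pos h, hS]
      · simp [trunc, if_neg h]
    have hg_neg : ∀ x, g (-x) = - g x := by
      intro x
      simp_rw [hg, trunc_neg hA_symm, Pi.neg_apply, mul_neg, Finset.sum_neg_distrib]
    -- transfer to μ
    have h1 : ∫ ω, rexp (lam * ∑ i, u i * Wbar ω i) ∂P = ∫ x, rexp (lam * g x) ∂μ := by
      calc ∫ ω, rexp (lam * ∑ i, u i * Wbar ω i) ∂P
          = ∫ ω, rexp (lam * g (W ω)) ∂P := by
            refine integral_congr_ae (Filter.Eventually.of_forall fun ω => ?_)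
            simp only [hWbar', hg]
        _ = ∫ x, rexp (lam * g x) ∂(Measure.map W P) :=
            (integral_map hWmeas.aemeasurable
              ((hgm.const_mul lam).exp).aestronglyMeasurable).symm
        _ = _ := by rw [hW]
    -- symmetry
    have hmap : Measure.map (fun x : Fin d → ℝ => -x) μ = μ := by
      rw [hμ]; exact pi_neg d
    have h2 : ∫ x, rexp (lam * g x) ∂μ = ∫ x, rexp (-(lam * g x)) ∂μ := by
      conv_lhs => rw [← hmap]
      rw [integral_map measurable_neg.aemeasurable
        ((hgm.const_mul lam).exp).aestronglyMeasurable]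
      simp_rw [hg_neg, mul_neg]
    -- integrabilities
    have hIS : Integrable (fun x => rexp (lam * S x)) μ := (pi_exp u hu lam).1
    have hIS' : Integrable (fun x => rexp (-(lam * S x))) μ := by
      have := (pi_exp u hu (-lam)).1
      refine this.congr (Filter.Eventually.of_forall fun x => ?_)
      simp only [neg_mul, hS]
    have hpt : ∀ x, rexp (lam * g x) + rexp (-(lam * g x))
        ≤ rexp (lam * S x) + rexp (-(lam * S x)) := by
      intro x
      by_cases h : x ∈ A
      · rw [hg_eq x, if_pos h]
      · rw [hg_eq x, if_neg h]
        norm_num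
        exact two_le_exp_add (lam * S x)
    have hIg : Integrable (fun x => rexp (lam * g x)) μ := by
      refine Integrable.mono' (hIS.add hIS') ((hgm.const_mul lam).exp).aestronglyMeasurable
        (Filter.Eventually.of_forall fun x => ?_)
      rw [Real.norm_eq_abs, abs_of_pos (Real.exp_pos _)]
      calc rexp (lam * g x) ≤ rexp (lam * g x) + rexp (-(lam * g x)) :=
            le_add_of_nonneg_right (Real.exp_pos _).le
        _ ≤ _ := hpt x
    have hIg' : Integrable (fun x => rexp (-(lam * g x))) μ := by
      refine Integrable.mono' (hIS.add hIS') (((hgm.const_mul lam).neg).exp).aestronglyMeasurable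
        (Filter.Eventually.of_forall fun x => ?_)
      rw [Real.norm_eq_abs, abs_of_pos (Real.exp_pos _)]
      calc rexp (-(lam * g x)) ≤ rexp (lam * g x) + rexp (-(lam * g x)) :=
            le_add_of_nonneg_left (Real.exp_pos _).le
        _ ≤ _ := hpt x
    -- main bound
    have h3 : 2 * ∫ x, rexp (lam * g x) ∂μ ≤ 2 * rexp (lam ^ 2 / 2) := by
      have hL : 2 * ∫ x, rexp (lam * g x) ∂μ
          = ∫ x, (rexp (lam * g x) + rexp (-(lam * g x))) ∂μ := by
        rw [integral_add hIg hIg', ← h2]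
        ring
      have hR : ∫ x, (rexp (lam * S x) + rexp (-(lam * S x))) ∂μ = 2 * rexp (lam ^ 2 / 2) := by
        rw [integral_add hIS hIS']
        have e1 : ∫ x, rexp (lam * S x) ∂μ = rexp (lam ^ 2 / 2) := (pi_exp u hu lam).2
        have e2 : ∫ x, rexp (-(lam * S x)) ∂μ = rexp (lam ^ 2 / 2) := by
          have := (pi_exp u hu (-lam)).2
          rw [show ((-lam) ^ 2 : ℝ) = lam ^ 2 by ring] at this
          rw [← this]
          refine integral_congr_ae (Filter.Eventually.of_forall fun x => ?_)
          simp only [neg_mul, hS]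
        rw [e1, e2]
        ring
      rw [hL, ← hR]
      exact integral_mono (hIg.add hIg') (hIS.add hIS') hpt
    rw [h1]
    have h4 : ∫ x, rexp (lam * g x) ∂μ ≤ rexp (lam ^ 2 / 2) := by linarith
    refine h4.trans (Real.exp_le_exp.mpr ?_)
    nlinarith [sq_nonneg lam]
end

section
/- Let $\mathscr{F}_\star$ be a star-shaped class of $B$-bounded functions (i.e., $f \in \mathscr{F}_\star$, $\gamma \in [0,1]$ implies $\gamma f \in \mathscr{F}_\star$), and fix $r > 0$. Suppose $\mathscr{F}_r \subseteq \partial B(r) = \{f \in \mathscr{F}_\star : \frac{1}{T}\sum_t\mathbb{E}\|f(X_t)\|_2^2 = r^2\}$ is an $r/\sqrt{8}$-net of $\partial B(r)$ in the supremum norm, and that on the event $\mathcal{E}^c$ every $f_i \in \mathscr{F}_r$ satisfies $\frac{1}{T}\sum_t\|f_i(X_t)\|_2^2 > \frac{1}{2}\cdot\frac{1}{T}\sum_t\mathbb{E}\|f_i(X_t)\|_2^2$. Then on $\mathcal{E}^c$, every $f \in \mathscr{F}_\star$ with $\frac{1}{T}\sum_t\mathbb{E}\|f(X_t)\|_2^2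 \geq r^2$ satisfies $\frac{1}{T}\sum_{t=0}^{T-1}\|f(X_t)\|_2^2 \geq \frac{1}{8}\cdot\frac{1}{T}\sum_{t=0}^{T-1}\mathbb{E}\|f(X_t)\|_2^2$. -/
open MeasureTheory Finset

/-- Deterministic core of the lower-isometry theorem (Theorem `lucemthm`):
on the complement of the bad event, lower isometry on an `r/√8`-net of the
sphere `∂B(r)` propagates, by star-shapedness and a parallelogram-type
inequality, to all functions outside the ball `B(r)`. -/
theorem lower_isometry_from_net
    {Ω 𝓧 : Type*} [MeasurableSpace Ω] [MeasurableSpace 𝓧]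
    {E : Type*} [NormedAddCommGroup E] [NormedSpace ℝ E]
    (P : Measure Ω) [IsProbabilityMeasure P]
    {T : ℕ} (hT : 0 < T) (X : Fin T → Ω → 𝓧)
    (Fstar : Set (𝓧 → E)) (B r : ℝ) (hB : 0 < B) (hr : 0 < r)
    (hstar : ∀ f ∈ Fstar, ∀ γ : ℝ, 0 ≤ γ → γ ≤ 1 → (γ • f) ∈ Fstar)
    (hbound : ∀ f ∈ Fstar, ∀ x, ‖f x‖ ≤ B)
    (Fr : Set (𝓧 → E))
    (hFr_sub : Fr ⊆ {f ∈ Fstar |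
      (1 / T : ℝ) * ∑ t, ∫ ω, ‖f (X t ω)‖ ^ 2 ∂P = r ^ 2})
    (hnet : ∀ f ∈ Fstar,
      (1 / T : ℝ) * ∑ t, ∫ ω, ‖f (X t ω)‖ ^ 2 ∂P = r ^ 2 →
      ∃ fi ∈ Fr, ∀ x, ‖f x - fi x‖ ≤ r / Real.sqrt 8)
    (ω : Ω)
    -- `ω` lies in the complement of the bad event: every net element
    -- satisfies the one-sided empirical lower bound
    (hω : ∀ fi ∈ Fr,
      (1 / 2 : ℝ) * ((1 / T : ℝ) * ∑ t, ∫ ω', ‖fi (X t ω')‖ ^ 2 ∂P)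
        < (1 / T : ℝ) * ∑ t, ‖fi (X t ω)‖ ^ 2) :
    ∀ f ∈ Fstar,
      r ^ 2 ≤ (1 / T : ℝ) * ∑ t, ∫ ω', ‖f (X t ω')‖ ^ 2 ∂P →
      (1 / 8 : ℝ) * ((1 / T : ℝ) * ∑ t, ∫ ω', ‖f (X t ω')‖ ^ 2 ∂P)
        ≤ (1 / T : ℝ) * ∑ t, ‖f (X t ω)‖ ^ 2 := by
 
  intro f hf hM
  set M : ℝ := (1 / T : ℝ) * ∑ t, ∫ ω', ‖f (X t ω')‖ ^ 2 ∂P with hMdef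
  have hMpos : (0:ℝ) < M := lt_of_lt_of_le (by positivity) hM
  set γ : ℝ := r / Real.sqrt M with hγdef
  have hsM : (0:ℝ) < Real.sqrt M := Real.sqrt_pos.mpr hMpos
  have hγpos : 0 < γ := div_pos hr hsM
  have hγle : γ ≤ 1 := by
    rw [hγdef, div_le_one hsM]
    calc r = Real.sqrt (r ^ 2) := (Real.sqrt_sq hr.le).symm
    _ ≤ Real.sqrt M := Real.sqrt_le_sqrt hM
  have hγsq : γ ^ 2 * M = r ^ 2 := by
    rw [hγdef, div_pow, Real.sq_sqrt hMpos.le]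
    field_simp
  have hg : (γ • f) ∈ Fstar := hstar f hf γ hγpos.le hγle
  have hnorm : ∀ x, ‖(γ • f) x‖ ^ 2 = γ ^ 2 * ‖f x‖ ^ 2 := by
    intro x
    simp [norm_smul, mul_pow, abs_of_pos hγpos]
  have hgmean : (1 / T : ℝ) * ∑ t, ∫ ω', ‖(γ • f) (X t ω')‖ ^ 2 ∂P = r ^ 2 := by
    have h1 : ∀ t : Fin T, (∫ ω', ‖(γ • f) (X t ω')‖ ^ 2 ∂P)
        = γ ^ 2 * ∫ ω', ‖f (X t ω')‖ ^ 2 ∂P := by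
      intro t
      have : ∀ ω' : Ω, ‖(γ • f) (X t ω')‖ ^ 2 = γ ^ 2 • ‖f (X t ω')‖ ^ 2 := fun ω' => by
        rw [hnorm, smul_eq_mul]
      simp_rw [this]
      rw [integral_smul, smul_eq_mul]
    calc (1 / T : ℝ) * ∑ t, ∫ ω', ‖(γ • f) (X t ω')‖ ^ 2 ∂P
        = γ ^ 2 * M := by rw [hMdef]; simp_rw [h1]; rw [← Finset.mul_sum]; ring
      _ = r ^ 2 := hγsq
  obtain ⟨fi, hfiFr, hfinet⟩ := hnet (γ • f) hg hgmean
  have hfimean := (hFr_sub hfiFr).2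
  have hωfi := hω fi hfiFr
  rw [hfimean] at hωfi
  -- pointwise inequality
  have hpt : ∀ t : Fin T, (1/2 : ℝ) * ‖fi (X t ω)‖ ^ 2 - r ^ 2 / 8
      ≤ ‖(γ • f) (X t ω)‖ ^ 2 := by
    intro t
    have h1 : ‖fi (X t ω)‖ ≤ ‖(γ • f) (X t ω)‖ + ‖(γ • f) (X t ω) - fi (X t ω)‖ := by
      have := norm_sub_norm_le ((γ • f) (X t ω)) (fi (X t ω))
      linarith [abs_le.mp (abs_norm_sub_norm_le ((γ • f) (X t ω)) (fi (X t ω)))]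
    have h2 : ‖fi (X t ω)‖ ^ 2 ≤ 2 * ‖(γ • f) (X t ω)‖ ^ 2 + 2 * ‖(γ • f) (X t ω) - fi (X t ω)‖ ^ 2 := by
      have h2a : ‖fi (X t ω)‖ ^ 2 ≤ (‖(γ • f) (X t ω)‖ + ‖(γ • f) (X t ω) - fi (X t ω)‖) ^ 2 :=
        pow_le_pow_left₀ (norm_nonneg _) h1 2
      nlinarith [sq_nonneg (‖(γ • f) (X t ω)‖ - ‖(γ • f) (X t ω) - fi (X t ω)‖)]
    have h3 : ‖(γ • f) (X t ω) - fi (X t ω)‖ ^ 2 ≤ r ^ 2 / 8 := by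
      have := hfinet (X t ω)
      have h8 : (0:ℝ) < Real.sqrt 8 := by positivity
      have := sq_le_sq' (by linarith [norm_nonneg ((γ • f) (X t ω) - fi (X t ω)), div_pos hr h8]) this
      calc ‖(γ • f) (X t ω) - fi (X t ω)‖ ^ 2 ≤ (r / Real.sqrt 8) ^ 2 := this
        _ = r ^ 2 / 8 := by rw [div_pow, Real.sq_sqrt (by norm_num : (8:ℝ) ≥ 0)]
    linarith
  have hTpos : (0:ℝ) < (T:ℝ) := by exact_mod_cast hT
  have hsum : (1/2 : ℝ) * ∑ t, ‖fi (X t ω)‖ ^ 2 - (T:ℝ) * (r ^ 2 / 8)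
      ≤ ∑ t, ‖(γ • f) (X t ω)‖ ^ 2 := by
    have h := Finset.sum_le_sum (s := Finset.univ) (fun t _ => hpt t)
    have hcount : ∑ _t : Fin T, (r ^ 2 / 8) = (T:ℝ) * (r ^ 2 / 8) := by
      simp [Finset.card_univ, mul_comm]
    rw [Finset.sum_sub_distrib, ← Finset.mul_sum, hcount] at h
    exact h
  have hemp : r ^ 2 / 8 < (1 / T : ℝ) * ∑ t, ‖(γ • f) (X t ω)‖ ^ 2 := by
    have h4 : (1 / T : ℝ) * ((1/2 : ℝ) * ∑ t, ‖fi (X t ω)‖ ^ 2 - (T:ℝ) * (r ^ 2 / 8))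
        ≤ (1 / T : ℝ) * ∑ t, ‖(γ • f) (X t ω)‖ ^ 2 :=
      mul_le_mul_of_nonneg_left hsum (by positivity)
    have h5 : (1 / T : ℝ) * ((T:ℝ) * (r ^ 2 / 8)) = r ^ 2 / 8 := by
      field_simp
    have h6 : (1 / T : ℝ) * ((1/2 : ℝ) * ∑ t, ‖fi (X t ω)‖ ^ 2)
        = (1/2 : ℝ) * ((1 / T : ℝ) * ∑ t, ‖fi (X t ω)‖ ^ 2) := by ring
    nlinarith [hωfi, mul_pos (by positivity : (0:ℝ) < (1/T:ℝ)) (by linarith : (0:ℝ) < 1)]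
  have hgemp : (1 / T : ℝ) * ∑ t, ‖(γ • f) (X t ω)‖ ^ 2
      = γ ^ 2 * ((1 / T : ℝ) * ∑ t, ‖f (X t ω)‖ ^ 2) := by
    simp_rw [hnorm]; rw [← Finset.mul_sum]; ring
  rw [hgemp] at hemp
  have hγ2pos : 0 < γ ^ 2 := by positivity
  have : M / 8 < (1 / T : ℝ) * ∑ t, ‖f (X t ω)‖ ^ 2 := by
    have : γ ^ 2 * (M / 8) = r ^ 2 / 8 := by rw [← hγsq]; ring
    nlinarith
  linarith
end
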